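/- Let f : [0,1] → ℝ be continuous. Then for all x,y ∈ [0,1], d_f(x,y) ≤ 2·sup{ |f(s) − f(t)| : s,t ∈ [0,1], |s−t| ≤ |x−y| }. Consequently the identity map from [0,1] with the Euclidean metric to [0,1] with the pseudometric d_f is uniformly continuous, and the topology induced by d_f on [0,1] is compact (so the associated quotient metric space, obtained by identifying points at d_f-distance zero, is a compact metric space). -/
import Mathlib


open Filter

noncomputable section

/-- `d_f(x,y) = f(x) + f(y) − 2·inf{f(s) : x∧y ≤ s ≤ x∨y}`. -/
def dPseudo (f : ℝ → ℝ) (x y : ℝ) : ℝ :=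
  f x + f y - 2 * sInf (f '' Set.Icc (min x y) (max x y))

lemma dPseudo_key (f : ℝ → ℝ) (hf : ContinuousOn f (Set.Icc 0 1))
    (x : ℝ) (hx : x ∈ Set.Icc (0:ℝ) 1) (y : ℝ) (hy : y ∈ Set.Icc (0:ℝ) 1) :
    ∃ c ∈ Set.Icc (0:ℝ) 1, |x - c| ≤ |x - y| ∧ |y - c| ≤ |x - y| ∧
      dPseudo f x y = (f x - f c) + (f y - f c) ∧ f c ≤ f x ∧ f c ≤ f y := by
  have hsub : Set.Icc (min x y) (max x y) ⊆ Set.Icc (0:ℝ) 1 :=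
    Set.Icc_subset_Icc (le_min hx.1 hy.1) (max_le hx.2 hy.2)
  have hcomp : IsCompact (Set.Icc (min x y) (max x y)) := isCompact_Icc
  have hne : (Set.Icc (min x y) (max x y)).Nonempty := Set.nonempty_Icc.2 (min_le_max)
  obtain ⟨c, hc, hmin⟩ := hcomp.exists_isMinOn hne (hf.mono hsub)
  have hInf : sInf (f '' Set.Icc (min x y) (max x y)) = f c := by
    apply le_antisymm
    · exact csInf_le (hcomp.bddBelow_image (hf.mono hsub)) ⟨c, hc, rfl⟩
    · refine le_csInf (hne.image f) ?_
      rintro b ⟨z, hz, rfl⟩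
      exact hmin hz
  have hxm : x ∈ Set.Icc (min x y) (max x y) :=
    ⟨min_le_left x y, le_max_left x y⟩
  have hym : y ∈ Set.Icc (min x y) (max x y) :=
    ⟨min_le_right x y, le_max_right x y⟩
  have habs : max x y - min x y = |x - y| := max_sub_min_eq_abs' x y
  refine ⟨c, hsub hc, ?_, ?_, ?_, hmin hxm, hmin hym⟩
  · rw [abs_sub_le_iff]
    constructor <;> [skip; skip] <;>
      linarith [hc.1, hc.2, hxm.1, hxm.2]
  · rw [abs_sub_le_iff]
    constructor <;> [skip; skip] <;>
      linarith [hc.1, hc.2, hym.1, hym.2]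
  · simp only [dPseudo, hInf]; ring

/-- for continuous `f : [0,1] → ℝ`,
`d_f(x,y) ≤ 2·sup{|f(s)−f(t)| : |s−t| ≤ |x−y|}`; hence the identity map from `([0,1],|·|)`
to `([0,1],d_f)` is uniformly continuous, and the topology induced by `d_f` on `[0,1]` is
compact (stated as sequential compactness for the pseudometric `d_f`, which is equivalent to
compactness of the associated quotient metric space). -/
theorem stmt_15 (f : ℝ → ℝ) (hf : ContinuousOn f (Set.Icc 0 1)) :
    (∀ x ∈ Set.Icc (0:ℝ) 1, ∀ y ∈ Set.Icc (0:ℝ) 1,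
      dPseudo f x y ≤ 2 * sSup {r : ℝ | ∃ s ∈ Set.Icc (0:ℝ) 1, ∃ t ∈ Set.Icc (0:ℝ) 1,
        |s - t| ≤ |x - y| ∧ r = |f s - f t|}) ∧
    (∀ ε : ℝ, 0 < ε → ∃ δ : ℝ, 0 < δ ∧ ∀ x ∈ Set.Icc (0:ℝ) 1, ∀ y ∈ Set.Icc (0:ℝ) 1,
      |x - y| < δ → dPseudo f x y < ε) ∧
    (∀ u : ℕ → ℝ, (∀ n, u n ∈ Set.Icc (0:ℝ) 1) →
      ∃ x ∈ Set.Icc (0:ℝ) 1, ∃ φ : ℕ → ℕ, StrictMono φ ∧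
        Tendsto (fun n => dPseudo f (u (φ n)) x) atTop (nhds 0)) := by
  -- bounds on f over [0,1]
  have hKc : IsCompact (f '' Set.Icc (0:ℝ) 1) := (isCompact_Icc).image_of_continuousOn hf
  obtain ⟨B, hB⟩ := hKc.bddAbove
  obtain ⟨A, hA⟩ := hKc.bddBelow
  -- part 2 first
  have part2 : ∀ ε : ℝ, 0 < ε → ∃ δ : ℝ, 0 < δ ∧ ∀ x ∈ Set.Icc (0:ℝ) 1,
      ∀ y ∈ Set.Icc (0:ℝ) 1, |x - y| < δ → dPseudo f x y < ε := by
    intro ε hε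
    have huc : UniformContinuousOn f (Set.Icc 0 1) :=
      (isCompact_Icc).uniformContinuousOn_of_continuous hf
    rw [Metric.uniformContinuousOn_iff] at huc
    obtain ⟨δ, hδ, hδ'⟩ := huc (ε / 2) (by linarith)
    refine ⟨δ, hδ, ?_⟩
    intro x hx y hy hxy
    obtain ⟨c, hc, h1, h2, heq, _, _⟩ := dPseudo_key f hf x hx y hy
    have e1 : |f x - f c| < ε / 2 := by
      have := hδ' x hx c hc (by rw [Real.dist_eq]; exact lt_of_le_of_lt h1 hxy)
      rwa [Real.dist_eq] at this
    have e2 : |f y - f c| < ε / 2 := by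
      have := hδ' y hy c hc (by rw [Real.dist_eq]; exact lt_of_le_of_lt h2 hxy)
      rwa [Real.dist_eq] at this
    have := abs_lt.1 e1
    have := abs_lt.1 e2
    rw [heq]; linarith
  have nonneg : ∀ x ∈ Set.Icc (0:ℝ) 1, ∀ y ∈ Set.Icc (0:ℝ) 1, 0 ≤ dPseudo f x y := by
    intro x hx y hy
    obtain ⟨c, hc, _, _, heq, h1, h2⟩ := dPseudo_key f hf x hx y hy
    rw [heq]; linarith
  refine ⟨?_, part2, ?_⟩
  · intro x hx y hy
    obtain ⟨c, hc, h1, h2, heq, _, _⟩ := dPseudo_key f hf x hx y hy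
    set S : Set ℝ := {r : ℝ | ∃ s ∈ Set.Icc (0:ℝ) 1, ∃ t ∈ Set.Icc (0:ℝ) 1,
        |s - t| ≤ |x - y| ∧ r = |f s - f t|} with hS
    have hbdd : BddAbove S := by
      refine ⟨B - A, ?_⟩
      rintro r ⟨s, hs, t, ht, _, rfl⟩
      have hs1 : f s ≤ B := hB ⟨s, hs, rfl⟩
      have hs2 : A ≤ f s := hA ⟨s, hs, rfl⟩
      have ht1 : f t ≤ B := hB ⟨t, ht, rfl⟩
      have ht2 : A ≤ f t := hA ⟨t, ht, rfl⟩
      rw [abs_sub_le_iff]; constructor <;> linarith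
    have m1 : |f x - f c| ≤ sSup S := le_csSup hbdd ⟨x, hx, c, hc, h1, rfl⟩
    have m2 : |f y - f c| ≤ sSup S := le_csSup hbdd ⟨y, hy, c, hc, h2, rfl⟩
    have a1 : f x - f c ≤ |f x - f c| := le_abs_self _
    have a2 : f y - f c ≤ |f y - f c| := le_abs_self _
    rw [heq]; linarith
  · intro u hu
    obtain ⟨x, hx, φ, hφ, hconv⟩ := isCompact_Icc.tendsto_subseq hu
    refine ⟨x, hx, φ, hφ, ?_⟩
    rw [Metric.tendsto_atTop]
    intro ε hε
    obtain ⟨δ, hδ, hδ'⟩ := part2 ε hε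
    have := (Metric.tendsto_atTop.1 hconv) δ hδ
    obtain ⟨N, hN⟩ := this
    refine ⟨N, fun n hn => ?_⟩
    have hd : dPseudo f (u (φ n)) x < ε := by
      apply hδ' _ (hu (φ n)) _ hx
      have := hN n hn
      rwa [Real.dist_eq] at this
    have hnn : 0 ≤ dPseudo f (u (φ n)) x := nonneg _ (hu (φ n)) _ hx
    rw [Real.dist_eq, sub_zero, abs_of_nonneg hnn]
    exact hd

end
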